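/- Let M(t) be a C¹ family of invertible matrices, R = (∂_tM)M^{−1}, and D_t v := ∂_t v − Rv. If div_𝒜 v = 0 for all t (where 𝒜, J are time-dependent with J div_𝒜 v = div(M^{−1}v)), then div_𝒜(D_t v) = 0 for all t. -/

import Mathlib

open Matrix


lemma clairaut_swap (g : ℝ × ℝ → ℝ) (hg : ContDiff ℝ 2 g) (a b : ℝ) :
    HasDerivAt (fun τ => deriv (fun s => g (τ, s)) b)
      (deriv (fun s => deriv (fun τ' => g (τ', s)) a) b) a := by
  have hgd : Differentiable ℝ g := hg.differentiable two_ne_zero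
  have h1 : ∀ p : ℝ × ℝ, HasDerivAt (fun s => g (p.1, s)) (fderiv ℝ g p (0, 1)) p.2 := by
    intro p
    have := (hgd p).hasFDerivAt.comp_hasDerivAt p.2 ((hasDerivAt_const p.2 p.1).prodMk (hasDerivAt_id p.2))
    simpa [Function.comp_def] using this
  have h2 : ∀ p : ℝ × ℝ, HasDerivAt (fun τ => g (τ, p.2)) (fderiv ℝ g p (1, 0)) p.1 := by
    intro p
    have := (hgd p).hasFDerivAt.comp_hasDerivAt p.1 ((hasDerivAt_id p.1).prodMk (hasDerivAt_const p.1 p.2))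
    simpa [Function.comp_def] using this
  have hF : ContDiff ℝ 1 (fderiv ℝ g) := hg.fderiv_right (by norm_num)
  have hFd : DifferentiableAt ℝ (fderiv ℝ g) (a, b) := (hF.differentiable one_ne_zero) (a, b)
  have s1 : HasDerivAt (fun τ => fderiv ℝ g (τ, b)) (fderiv ℝ (fderiv ℝ g) (a, b) (1, 0)) a := by
    have := hFd.hasFDerivAt.comp_hasDerivAt a ((hasDerivAt_id a).prodMk (hasDerivAt_const a b))
    simpa [Function.comp_def] using this
  have s1' : HasDerivAt (fun τ => fderiv ℝ g (τ, b) (0, 1)) (fderiv ℝ (fderiv ℝ g) (a, b) (1, 0) (0, 1)) a := by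
    have := s1.clm_apply (hasDerivAt_const a ((0:ℝ), (1:ℝ)))
    simpa using this
  have s2 : HasDerivAt (fun s => fderiv ℝ g (a, s)) (fderiv ℝ (fderiv ℝ g) (a, b) (0, 1)) b := by
    have := hFd.hasFDerivAt.comp_hasDerivAt b ((hasDerivAt_const b a).prodMk (hasDerivAt_id b))
    simpa [Function.comp_def] using this
  have s2' : HasDerivAt (fun s => fderiv ℝ g (a, s) (1, 0)) (fderiv ℝ (fderiv ℝ g) (a, b) (0, 1) (1, 0)) b := by
    have := s2.clm_apply (hasDerivAt_const b ((1:ℝ), (0:ℝ)))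
    simpa using this
  have hsym : fderiv ℝ (fderiv ℝ g) (a, b) (1, 0) (0, 1)
      = fderiv ℝ (fderiv ℝ g) (a, b) (0, 1) (1, 0) :=
    (hg.contDiffAt.isSymmSndFDerivAt (by simp [minSmoothness_of_isRCLikeNormedField])) _ _
  have e1 : (fun τ => deriv (fun s => g (τ, s)) b) = fun τ => fderiv ℝ g (τ, b) (0, 1) :=
    funext fun τ => (h1 (τ, b)).deriv
  have e2 : deriv (fun s => deriv (fun τ' => g (τ', s)) a) b
      = fderiv ℝ (fderiv ℝ g) (a, b) (0, 1) (1, 0) := by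
    have e2' : (fun s => deriv (fun τ' => g (τ', s)) a) = fun s => fderiv ℝ g (a, s) (1, 0) :=
      funext fun s => (h2 (a, s)).deriv
    rw [e2']; exact s2'.deriv
  rw [e1, e2, ← hsym]
  exact s1'

lemma slice1_contDiff (W : ℝ × (ℝ × ℝ) → ℝ) (hW : ContDiff ℝ 2 W) (c : ℝ) :
    ContDiff ℝ 2 (fun q : ℝ × ℝ => W (q.1, (q.2, c))) :=
  hW.comp (contDiff_fst.prodMk (contDiff_snd.prodMk contDiff_const))

lemma slice2_contDiff (W : ℝ × (ℝ × ℝ) → ℝ) (hW : ContDiff ℝ 2 W) (c : ℝ) :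
    ContDiff ℝ 2 (fun q : ℝ × ℝ => W (q.1, (c, q.2))) :=
  hW.comp (contDiff_fst.prodMk (contDiff_const.prodMk contDiff_snd))


/-- Spatial divergence of a planar vector field. -/
noncomputable def spatialDiv (F : ℝ × ℝ → Fin 2 → ℝ) (x : ℝ × ℝ) : ℝ :=
  deriv (fun s => F (s, x.2) 0) x.1 + deriv (fun s => F (x.1, s) 1) x.2

/-- The operator `D_t v = ∂_t v − Rv` with `R = (∂_tM)M⁻¹` preserves the
`div_𝒜`-free condition: since `J div_𝒜 w = div(M⁻¹w)` (with `J ≠ 0`),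
`div_𝒜 v = 0` for all `t` is `div(M⁻¹(t)v(t)) = 0`, and then
`div(M⁻¹ D_t v) = div(∂_t(M⁻¹v)) = ∂_t div(M⁻¹v) = 0`, i.e.
`div_𝒜(D_t v) = 0`. -/
theorem Dt_preserves_divA_free
    (M M' : ℝ → ℝ × ℝ → Matrix (Fin 2) (Fin 2) ℝ)
    (v v' : ℝ → ℝ × ℝ → Fin 2 → ℝ)
    (hMsmooth : ∀ i j, ContDiff ℝ 2 fun p : ℝ × (ℝ × ℝ) => M p.1 p.2 i j)
    (hvsmooth : ∀ i, ContDiff ℝ 2 fun p : ℝ × (ℝ × ℝ) => v p.1 p.2 i)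
    (hMinv : ∀ t x, IsUnit (M t x).det)
    (hM' : ∀ t x i j, HasDerivAt (fun s => M s x i j) (M' t x i j) t)
    (hv' : ∀ t x, HasDerivAt (fun s => v s x) (v' t x) t)
    (hfree : ∀ t x, spatialDiv (fun y => (M t y)⁻¹ *ᵥ v t y) x = 0) :
    ∀ t x, spatialDiv
        (fun y => (M t y)⁻¹ *ᵥ (v' t y - (M' t y * (M t y)⁻¹) *ᵥ v t y)) x = 0 := by
  have hdet0 : ∀ s y, (M s y).det ≠ 0 := fun s y => (hMinv s y).ne_zero
  -- smoothness of entries of the inverse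
  have hNsm : ∀ i j, ContDiff ℝ 2 (fun p : ℝ × (ℝ × ℝ) => (M p.1 p.2)⁻¹ i j) := by
    intro i j
    have hdet : ContDiff ℝ 2 (fun p : ℝ × (ℝ × ℝ) => (M p.1 p.2).det) := by
      simp only [Matrix.det_fin_two]
      exact ((hMsmooth 0 0).mul (hMsmooth 1 1)).sub ((hMsmooth 0 1).mul (hMsmooth 1 0))
    have hadj : ContDiff ℝ 2 (fun p : ℝ × (ℝ × ℝ) => (M p.1 p.2).adjugate i j) := by
      simp only [Matrix.adjugate_fin_two]
      fin_cases i <;> fin_cases j <;> simp <;>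
        first
          | exact hMsmooth 1 1
          | exact (hMsmooth 0 1).neg
          | exact (hMsmooth 1 0).neg
          | exact hMsmooth 0 0
    have key : (fun p : ℝ × (ℝ × ℝ) => (M p.1 p.2)⁻¹ i j)
        = fun p => ((M p.1 p.2).det)⁻¹ * (M p.1 p.2).adjugate i j := by
      funext p
      rw [Matrix.inv_def, Ring.inverse_eq_inv']
      simp [Matrix.smul_apply]
    rw [key]
    exact (hdet.inv fun p => hdet0 p.1 p.2).mul hadj
  -- smoothness of the components of M⁻¹ v
  have hW : ∀ i, ContDiff ℝ 2 (fun p : ℝ × (ℝ × ℝ) => ((M p.1 p.2)⁻¹ *ᵥ v p.1 p.2) i) := by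
    intro i
    have key : (fun p : ℝ × (ℝ × ℝ) => ((M p.1 p.2)⁻¹ *ᵥ v p.1 p.2) i)
        = fun p => (M p.1 p.2)⁻¹ i 0 * v p.1 p.2 0 + (M p.1 p.2)⁻¹ i 1 * v p.1 p.2 1 := by
      funext p; simp [Matrix.mulVec, dotProduct, Fin.sum_univ_two]
    rw [key]
    exact ((hNsm i 0).mul (hvsmooth 0)).add ((hNsm i 1).mul (hvsmooth 1))
  -- the key time-derivative computation
  have key : ∀ (τ : ℝ) (y : ℝ × ℝ) (i : Fin 2),
      HasDerivAt (fun s => ((M s y)⁻¹ *ᵥ v s y) i)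
        (((M τ y)⁻¹ *ᵥ (v' τ y - (M' τ y * (M τ y)⁻¹) *ᵥ v τ y)) i) τ := by
    intro τ y i
    have hline : ContDiff ℝ 2 (fun s : ℝ => ((s, y) : ℝ × (ℝ × ℝ))) :=
      contDiff_id.prodMk contDiff_const
    have hNd : ∀ i j, HasDerivAt (fun s => (M s y)⁻¹ i j)
        (deriv (fun s => (M s y)⁻¹ i j) τ) τ := fun i j =>
      ((((hNsm i j).comp hline).differentiable two_ne_zero) τ).hasDerivAt
    set D : Matrix (Fin 2) (Fin 2) ℝ := fun i j => deriv (fun s => (M s y)⁻¹ i j) τ with hDdef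
    have hDM : ∀ i j, D i 0 * M τ y 0 j + (M τ y)⁻¹ i 0 * M' τ y 0 j
        + (D i 1 * M τ y 1 j + (M τ y)⁻¹ i 1 * M' τ y 1 j) = 0 := by
      intro i j
      have hconst : (fun s => (M s y)⁻¹ i 0 * M s y 0 j + (M s y)⁻¹ i 1 * M s y 1 j)
          = fun _ => (1 : Matrix (Fin 2) (Fin 2) ℝ) i j := by
        funext s
        have h := congrFun (congrFun (Matrix.nonsing_inv_mul (M s y) (hMinv s y)) i) j
        simpa [Matrix.mul_apply, Fin.sum_univ_two] using h
      have hL : HasDerivAt (fun s => (M s y)⁻¹ i 0 * M s y 0 j + (M s y)⁻¹ i 1 * M s y 1 j)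
          (D i 0 * M τ y 0 j + (M τ y)⁻¹ i 0 * M' τ y 0 j
            + (D i 1 * M τ y 1 j + (M τ y)⁻¹ i 1 * M' τ y 1 j)) τ :=
        ((hNd i 0).mul (hM' τ y 0 j)).add ((hNd i 1).mul (hM' τ y 1 j))
      rw [hconst] at hL
      exact hL.unique (hasDerivAt_const τ _)
    have hD : D = -((M τ y)⁻¹ * M' τ y * (M τ y)⁻¹) := by
      have h1 : D * M τ y = -((M τ y)⁻¹ * M' τ y) := by
        ext i j
        have := hDM i j
        simp only [Matrix.mul_apply, Fin.sum_univ_two, Matrix.neg_apply]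
        linarith
      calc D = D * (M τ y * (M τ y)⁻¹) := by
              rw [Matrix.mul_nonsing_inv _ (hMinv τ y), mul_one]
        _ = D * M τ y * (M τ y)⁻¹ := by rw [mul_assoc]
        _ = -((M τ y)⁻¹ * M' τ y) * (M τ y)⁻¹ := by rw [h1]
        _ = -((M τ y)⁻¹ * M' τ y * (M τ y)⁻¹) := by rw [neg_mul]
    have hvd : ∀ k : Fin 2, HasDerivAt (fun s => v s y k) (v' τ y k) τ := by
      intro k
      have := ((ContinuousLinearMap.proj k : (Fin 2 → ℝ) →L[ℝ] ℝ).hasFDerivAt).comp_hasDerivAt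
        τ (hv' τ y)
      simpa [Function.comp_def] using this
    have hfun : (fun s => ((M s y)⁻¹ *ᵥ v s y) i)
        = fun s => (M s y)⁻¹ i 0 * v s y 0 + (M s y)⁻¹ i 1 * v s y 1 := by
      funext s; simp [Matrix.mulVec, dotProduct, Fin.sum_univ_two]
    have hval : ((M τ y)⁻¹ *ᵥ (v' τ y - (M' τ y * (M τ y)⁻¹) *ᵥ v τ y)) i
        = D i 0 * v τ y 0 + (M τ y)⁻¹ i 0 * v' τ y 0
          + (D i 1 * v τ y 1 + (M τ y)⁻¹ i 1 * v' τ y 1) := by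
      rw [hD]
      simp only [Matrix.mulVec, dotProduct, Fin.sum_univ_two, Matrix.mul_apply,
        Matrix.neg_apply, Pi.sub_apply]
      ring
    rw [hfun, hval]
    exact ((hNd i 0).mul (hvd 0)).add ((hNd i 1).mul (hvd 1))
  -- assembly via Clairaut
  intro t x
  have hg0 : ContDiff ℝ 2 (fun q : ℝ × ℝ => ((M q.1 (q.2, x.2))⁻¹ *ᵥ v q.1 (q.2, x.2)) 0) :=
    slice1_contDiff _ (hW 0) x.2
  have hg1 : ContDiff ℝ 2 (fun q : ℝ × ℝ => ((M q.1 (x.1, q.2))⁻¹ *ᵥ v q.1 (x.1, q.2)) 1) :=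
    slice2_contDiff _ (hW 1) x.1
  have c0 := clairaut_swap _ hg0 t x.1
  have c1 := clairaut_swap _ hg1 t x.2
  have e0 : (fun s => ((M t (s, x.2))⁻¹ *ᵥ
        (v' t (s, x.2) - (M' t (s, x.2) * (M t (s, x.2))⁻¹) *ᵥ v t (s, x.2))) 0)
      = fun s => deriv (fun τ => ((M τ (s, x.2))⁻¹ *ᵥ v τ (s, x.2)) 0) t :=
    funext fun s => ((key t (s, x.2) 0).deriv).symm
  have e1 : (fun s => ((M t (x.1, s))⁻¹ *ᵥ
        (v' t (x.1, s) - (M' t (x.1, s) * (M t (x.1, s))⁻¹) *ᵥ v t (x.1, s))) 1)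
      = fun s => deriv (fun τ => ((M τ (x.1, s))⁻¹ *ᵥ v τ (x.1, s)) 1) t :=
    funext fun s => ((key t (x.1, s) 1).deriv).symm
  have hsum : (fun τ => deriv (fun s => ((M τ (s, x.2))⁻¹ *ᵥ v τ (s, x.2)) 0) x.1
      + deriv (fun s => ((M τ (x.1, s))⁻¹ *ᵥ v τ (x.1, s)) 1) x.2) = fun _ => (0 : ℝ) :=
    funext fun τ => hfree τ x
  have hzero := (hsum ▸ (show HasDerivAt (fun τ => deriv (fun s => ((M τ (s, x.2))⁻¹ *ᵥ v τ (s, x.2)) 0) x.1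
      + deriv (fun s => ((M τ (x.1, s))⁻¹ *ᵥ v τ (x.1, s)) 1) x.2) _ t from c0.add c1)).unique (hasDerivAt_const t 0)
  show deriv (fun s => ((M t (s, x.2))⁻¹ *ᵥ
        (v' t (s, x.2) - (M' t (s, x.2) * (M t (s, x.2))⁻¹) *ᵥ v t (s, x.2))) 0) x.1
      + deriv (fun s => ((M t (x.1, s))⁻¹ *ᵥ
        (v' t (x.1, s) - (M' t (x.1, s) * (M t (x.1, s))⁻¹) *ᵥ v t (x.1, s))) 1) x.2 = 0
  rw [e0, e1]
  exact hzero
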